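/- (Properties of the positivity-preserving limiter.) Let I = [a,b] with a < b, let f : I → ℝ be continuous, let f̄ = (b−a)^{-1} ∫_a^b f(x) dx be its average, and let m = min_{x∈I} f(x). Assume f̄ ≥ 0 and m < f̄. Set θ = min{ f̄/(f̄ − m), 1 } and define f^{new}(x) = θ(f(x) − f̄) + f̄. Then: (i) the average is preserved, (b−a)^{-1} ∫_a^b f^{new}(x) dx = f̄; and (ii) f^{new}(x) ≥ 0 for all x ∈ I. -/

import Mathlib

open MeasureTheory

/-- **Properties of the positivity-preserving limiter.**
Let `I = [a,b]` with `a < b`, `f` continuous on `I`, `f̄` its average over `I`, and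
`m = min_{x∈I} f(x)`. Assume `f̄ ≥ 0` and `m < f̄`. With `θ = min{f̄/(f̄ − m), 1}` and
`f^new(x) = θ(f(x) − f̄) + f̄`, (i) the average of `f^new` over `I` equals `f̄`, and
(ii) `f^new(x) ≥ 0` for all `x ∈ I`. -/
theorem positivity_preserving_limiter (a b : ℝ) (hab : a < b)
    (f : ℝ → ℝ) (hf : ContinuousOn f (Set.Icc a b))
    (fbar m θ : ℝ)
    (hfbar : fbar = (b - a)⁻¹ * ∫ x in a..b, f x)
    (hm : IsLeast (f '' Set.Icc a b) m)
    (hfbar0 : 0 ≤ fbar) (hmlt : m < fbar)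
    (hθ : θ = min (fbar / (fbar - m)) 1) :
    (b - a)⁻¹ * (∫ x in a..b, (θ * (f x - fbar) + fbar)) = fbar ∧
    ∀ x ∈ Set.Icc a b, 0 ≤ θ * (f x - fbar) + fbar := by
  have hba : (0:ℝ) < b - a := by linarith
  have hba' : (b - a) ≠ 0 := ne_of_gt hba
  have hfi : IntervalIntegrable f volume a b :=
    ((hf.mono (by rw [Set.uIcc_of_le hab.le])).intervalIntegrable)
  have hint : ∫ x in a..b, f x = (b - a) * fbar := by
    rw [hfbar]; field_simp
  have hmpos : 0 < fbar - m := by linarith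
  have hθ0 : 0 ≤ θ := by
    rw [hθ]
    exact le_min (div_nonneg hfbar0 hmpos.le) zero_le_one
  have hθle : θ * (fbar - m) ≤ fbar := by
    have : θ ≤ fbar / (fbar - m) := by rw [hθ]; exact min_le_left _ _
    calc θ * (fbar - m) ≤ (fbar / (fbar - m)) * (fbar - m) := by
          exact mul_le_mul_of_nonneg_right this hmpos.le
      _ = fbar := by field_simp
  constructor
  · have h1 : ∫ x in a..b, (θ * (f x - fbar) + fbar)
        = θ * ((∫ x in a..b, f x) - (b - a) * fbar) + (b - a) * fbar := by
      rw [intervalIntegral.integral_add ((hfi.sub (intervalIntegrable_const)).const_mul θ)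
        intervalIntegrable_const,
        intervalIntegral.integral_const_mul,
        intervalIntegral.integral_sub hfi intervalIntegrable_const,
        intervalIntegral.integral_const, smul_eq_mul]
    rw [h1, hint]
    field_simp
    ring
  · intro x hx
    have hmx : m ≤ f x := hm.2 ⟨x, hx, rfl⟩
    have : θ * (m - fbar) ≤ θ * (f x - fbar) :=
      mul_le_mul_of_nonneg_left (by linarith) hθ0
    nlinarith
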